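/- If a vector w already satisfies a subset S of the group constraints (i.e., ‖P_G w‖_q ≤ λ for all G ∈ S), then projecting w onto the intersection of all constraints equals projecting onto the intersection of the remaining constraints: π_{K}(w) = π_{K_{G∖S}}(w), where K = ∩_{G∈𝒢} {x : ‖P_G x‖_q ≤ λ} and K_{G∖S} = ∩_{G∈𝒢∖S} {x : ‖P_G x‖_q ≤ λ}. -/

import Mathlib

open scoped Classical ENNReal NNReal

noncomputable def pNormOn (p : ℝ≥0∞) [Fact (1 ≤ p)] {ι : Type*} [Fintype ι] (v : ι → ℝ) : ℝ :=
  ‖(WithLp.equiv p (ι → ℝ)).symm v‖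

noncomputable def grpNorm {d : ℕ} (p : ℝ≥0∞) [Fact (1 ≤ p)] (G : Finset (Fin d))
    (x : Fin d → ℝ) : ℝ :=
  pNormOn p (fun j : {j : Fin d // j ∈ G} => x j.1)

def embed {d : ℕ} (G : Finset (Fin d)) (v : {j : Fin d // j ∈ G} → ℝ) : Fin d → ℝ :=
  fun j => if h : j ∈ G then v ⟨j, h⟩ else 0

noncomputable def Omega {d B : ℕ} (p : ℝ≥0∞) [Fact (1 ≤ p)] (G : Fin B → Finset (Fin d))
    (x : Fin d → ℝ) : ℝ :=
  sInf { s | ∃ v : (r : Fin B) → {j : Fin d // j ∈ G r} → ℝ,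
    (∑ r, embed (G r) (v r)) = x ∧ s = ∑ r, pNormOn p (v r) }

noncomputable def nrm2 {d : ℕ} (x : Fin d → ℝ) : ℝ := Real.sqrt (∑ j, (x j) ^ 2)

lemma pNormOn_mono (q : ℝ≥0∞) [Fact (1 ≤ q)] {ι : Type*} [Fintype ι] {u v : ι → ℝ}
    (h : ∀ i, |u i| ≤ |v i|) : pNormOn q u ≤ pNormOn q v := by
  unfold pNormOn
  rcases eq_or_ne q ⊤ with hq | hq
  · subst hq
    rw [PiLp.norm_eq_ciSup, PiLp.norm_eq_ciSup]
    cases isEmpty_or_nonempty ι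
    · simp [Real.iSup_of_isEmpty]
    · exact ciSup_mono (Set.Finite.bddAbove (Set.finite_range _))
        (fun i => by simpa [Real.norm_eq_abs] using h i)
  · have hq0 : 0 < q.toReal :=
      ENNReal.toReal_pos (lt_of_lt_of_le one_pos (Fact.out : 1 ≤ q)).ne' hq
    rw [PiLp.norm_eq_sum hq0, PiLp.norm_eq_sum hq0]
    apply Real.rpow_le_rpow (by positivity)
    · apply Finset.sum_le_sum
      intro i _
      simp only [WithLp.equiv_symm_apply, PiLp.toLp_apply, Real.norm_eq_abs]
      exact Real.rpow_le_rpow (abs_nonneg _) (h i) hq0.le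
    · positivity

lemma pNormOn_mid (q : ℝ≥0∞) [Fact (1 ≤ q)] {ι : Type*} [Fintype ι] (a b : ι → ℝ) :
    pNormOn q (fun i => (a i + b i) / 2) ≤ (pNormOn q a + pNormOn q b) / 2 := by
  unfold pNormOn
  have he : (WithLp.equiv q (ι → ℝ)).symm (fun i => (a i + b i) / 2) =
      (2:ℝ)⁻¹ • ((WithLp.equiv q (ι → ℝ)).symm a + (WithLp.equiv q (ι → ℝ)).symm b) := by
    ext i
    simp [WithLp.equiv_symm_apply, PiLp.toLp_apply]
    ring
  rw [he, norm_smul]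
  have := norm_add_le ((WithLp.equiv q (ι → ℝ)).symm a) ((WithLp.equiv q (ι → ℝ)).symm b)
  rw [Real.norm_eq_abs]
  rw [abs_of_nonneg (by norm_num : (0:ℝ) ≤ (2:ℝ)⁻¹)]
  linarith

lemma clamp_props (a b : ℝ) :
    |min (max b (min 0 a)) (max 0 a)| ≤ |b| ∧
    (a - min (max b (min 0 a)) (max 0 a)) ^ 2 ≤ (a - b) ^ 2 ∧
    ((a - min (max b (min 0 a)) (max 0 a)) ^ 2 = (a - b) ^ 2 → |b| ≤ |a|) := by
  have hlo0 : min 0 a ≤ 0 := min_le_left _ _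
  have hloa : min 0 a ≤ a := min_le_right _ _
  have hhi0 : 0 ≤ max 0 a := le_max_left _ _
  have hhia : a ≤ max 0 a := le_max_right _ _
  have hlohi : min 0 a ≤ max 0 a := hlo0.trans hhi0
  have hloabs : -|a| ≤ min 0 a := le_min (neg_nonpos.mpr (abs_nonneg a)) (neg_abs_le a)
  have hhiabs : max 0 a ≤ |a| := max_le (abs_nonneg a) (le_abs_self a)
  rcases le_total b (min 0 a) with h1 | h1
  · have hc : min (max b (min 0 a)) (max 0 a) = min 0 a := by
      rw [max_eq_right h1, min_eq_left hlohi]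
    rw [hc]
    refine ⟨?_, ?_, ?_⟩
    · rw [abs_of_nonpos hlo0, abs_of_nonpos (h1.trans hlo0)]; linarith
    · nlinarith
    · intro he
      have hb : b = min 0 a := by nlinarith
      rw [hb, abs_of_nonpos hlo0]; linarith
  · have hm : max b (min 0 a) = b := max_eq_left h1
    rw [hm]
    rcases le_total b (max 0 a) with h2 | h2
    · rw [min_eq_left h2]
      exact ⟨le_refl _, le_refl _, fun _ => abs_le.mpr ⟨by linarith, by linarith⟩⟩
    · rw [min_eq_right h2]
      refine ⟨?_, ?_, ?_⟩
      · rw [abs_of_nonneg hhi0, abs_of_nonneg (hhi0.trans h2)]; linarith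
      · nlinarith
      · intro he
        have hb : b = max 0 a := by nlinarith
        rw [hb, abs_of_nonneg hhi0]; linarith


/-- If `w` already satisfies a subset `S` of the group constraints, projecting `w` onto the
intersection of all constraints equals projecting onto the intersection of the remaining
constraints. -/
theorem stmt7 (q : ℝ≥0∞) [Fact (1 ≤ q)] {d : ℕ} (GG S : Finset (Finset (Fin d)))
    (hS : S ⊆ GG) (lam : ℝ) (hlam : 0 < lam) (w y z : Fin d → ℝ)
    (hw : ∀ G ∈ S, grpNorm q G w ≤ lam)
    (hyK : ∀ G ∈ GG, grpNorm q G y ≤ lam)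
    (hymin : ∀ u : Fin d → ℝ, (∀ G ∈ GG, grpNorm q G u ≤ lam) →
      ∑ j, (w j - y j) ^ 2 ≤ ∑ j, (w j - u j) ^ 2)
    (hzK : ∀ G ∈ GG \ S, grpNorm q G z ≤ lam)
    (hzmin : ∀ u : Fin d → ℝ, (∀ G ∈ GG \ S, grpNorm q G u ≤ lam) →
      ∑ j, (w j - z j) ^ 2 ≤ ∑ j, (w j - u j) ^ 2) :
    y = z := by
  classical
  set t : Fin d → ℝ := fun j => min (max (z j) (min 0 (w j))) (max 0 (w j)) with ht
  have h1 : ∀ j, |t j| ≤ |z j| := fun j => (clamp_props (w j) (z j)).1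
  have h3 : ∀ j, (w j - t j) ^ 2 ≤ (w j - z j) ^ 2 := fun j => (clamp_props (w j) (z j)).2.1
  have habs : ∀ j, |z j| ≤ |w j| := by
    have htK : ∀ G ∈ GG \ S, grpNorm q G t ≤ lam := fun G hG =>
      le_trans (pNormOn_mono q (fun i => h1 i.1)) (hzK G hG)
    have hle := hzmin t htK
    have hsum : ∑ j, (w j - t j) ^ 2 = ∑ j, (w j - z j) ^ 2 :=
      le_antisymm (Finset.sum_le_sum fun j _ => h3 j) hle
    have heq := (Finset.sum_eq_sum_iff_of_le (fun j _ => h3 j)).1 hsum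
    exact fun j => (clamp_props (w j) (z j)).2.2 (heq j (Finset.mem_univ j))
  have hzKall : ∀ G ∈ GG, grpNorm q G z ≤ lam := by
    intro G hG
    by_cases hGS : G ∈ S
    · exact le_trans (pNormOn_mono q (fun i => habs i.1)) (hw G hGS)
    · exact hzK G (Finset.mem_sdiff.mpr ⟨hG, hGS⟩)
  have hyz : ∑ j, (w j - y j) ^ 2 = ∑ j, (w j - z j) ^ 2 :=
    le_antisymm (hymin z hzKall) (hzmin y fun G hG => hyK G (Finset.mem_sdiff.mp hG).1)
  set m : Fin d → ℝ := fun j => (y j + z j) / 2 with hm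
  have hmK : ∀ G ∈ GG, grpNorm q G m ≤ lam := by
    intro G hG
    have := pNormOn_mid q (fun j : {j : Fin d // j ∈ G} => y j.1)
      (fun j : {j : Fin d // j ∈ G} => z j.1)
    have h1' := hyK G hG
    have h2' := hzKall G hG
    unfold grpNorm at *
    calc pNormOn q (fun j : {j : Fin d // j ∈ G} => m j.1)
        ≤ (pNormOn q (fun j : {j : Fin d // j ∈ G} => y j.1) +
           pNormOn q (fun j : {j : Fin d // j ∈ G} => z j.1)) / 2 := this
      _ ≤ lam := by linarith
  have hkey : ∑ j, (w j - m j) ^ 2 =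
      (∑ j, (w j - y j) ^ 2) / 2 + (∑ j, (w j - z j) ^ 2) / 2 - ∑ j, ((y j - z j) / 2) ^ 2 := by
    rw [Finset.sum_div, Finset.sum_div, ← Finset.sum_add_distrib, ← Finset.sum_sub_distrib]
    refine Finset.sum_congr rfl fun j _ => ?_
    simp only [hm]
    ring
  have hmle := hymin m hmK
  have hsum0 : ∑ j, ((y j - z j) / 2) ^ 2 ≤ 0 := by
    rw [hkey] at hmle
    linarith [hyz]
  funext j
  have hj : ((y j - z j) / 2) ^ 2 = 0 := by
    have hle := Finset.single_le_sum (fun i (_ : i ∈ Finset.univ) => sq_nonneg ((y i - z i) / 2))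
      (Finset.mem_univ j)
    nlinarith [sq_nonneg ((y j - z j) / 2)]
  have := pow_eq_zero_iff (n := 2) (by norm_num) |>.mp hj
  have : y j - z j = 0 := by
    field_simp at this
    linarith
  linarith
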